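/- Fix v = (v_1, …, v_d) ∈ ℝ^d. For every ε > 0 there exists r₀ > 0 (one may take r₀ = 1 + max_i |v_i| + 2/min(ε,1)) such that for all real E with |E| > r₀ the following holds: let z ∈ ℂ ∪ {∞} and write z_j = R_{v,E,j}(z) for the iterates on the Riemann sphere. If for some index j₁ ∈ {1, …, d} one has z_{j₁−1} ∉ U_ε(E − v_{j₁}), then for every j₂ with j₁ + 2 ≤ j₂ ≤ d the value z_{j₂} is finite and nonzero, and 1/z_{j₂} ∈ U_ε(E − v_{j₂}). -/

import Mathlib

open scoped Classical

noncomputable section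

/-- The Möbius transformation `z ↦ 1 / (w - z)` of the Riemann sphere `ℂ ∪ {∞}`
(with `∞ ↦ 0` and `w ↦ ∞`); for `w = E - a` this is the projective action of the
Schrödinger matrix `[[E - a, -1], [1, 0]]` in the affine chart `z = ψ₂/ψ₁`. -/
def mobius (w : ℂ) (z : OnePoint ℂ) : OnePoint ℂ :=
  Option.elim z ((0 : ℂ) : OnePoint ℂ)
    fun x => if w = x then OnePoint.infty else (((w - x)⁻¹ : ℂ) : OnePoint ℂ)

/-- `v_j` for the 1-based index `j ∈ {1, …, d}` (junk value `0` outside this range). -/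
def vind {d : ℕ} (v : Fin d → ℝ) (j : ℕ) : ℝ :=
  if h : j - 1 < d then v ⟨j - 1, h⟩ else 0

/-- The composition `R_{v,E,j} = R_{v_j,E} ∘ ⋯ ∘ R_{v_1,E}`, with `R_{v,E,0} = id`. -/
def mobIter {d : ℕ} (v : Fin d → ℝ) (E : ℝ) : ℕ → OnePoint ℂ → OnePoint ℂ
  | 0 => id
  | j + 1 => fun z => mobius ((E : ℂ) - (vind v (j + 1) : ℂ)) (mobIter v E j z)

lemma mobius_coe (w x : ℂ) (h : w ≠ x) :
    mobius w (x : OnePoint ℂ) = (((w - x)⁻¹ : ℂ) : OnePoint ℂ) := by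
  show (if w = x then OnePoint.infty else (((w - x)⁻¹ : ℂ) : OnePoint ℂ)) = _
  exact if_neg h

lemma substep (w y : ℂ) (c : ℝ) (hc : 0 < c) (h : ‖y‖ + 1/c < ‖w‖) :
    ∃ x : ℂ, mobius w (y : OnePoint ℂ) = (x : OnePoint ℂ) ∧ x ≠ 0 ∧ ‖x‖ < c ∧ x⁻¹ = w - y := by
  have h1 : 1/c < ‖w - y‖ := by
    have h2 : ‖w‖ ≤ ‖w - y‖ + ‖y‖ := by
      calc ‖w‖ = ‖(w - y) + y‖ := by ring_nf
        _ ≤ ‖w - y‖ + ‖y‖ := norm_add_le _ _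
    linarith
  have hpos : (0:ℝ) < 1/c := by positivity
  have hne : w ≠ y := by
    intro he
    rw [he, sub_self, norm_zero] at h1
    linarith
  refine ⟨(w - y)⁻¹, mobius_coe w y hne, inv_ne_zero (sub_ne_zero.mpr hne), ?_, inv_inv _⟩
  rw [norm_inv]
  calc ‖w - y‖⁻¹ < (1/c)⁻¹ := by
        exact inv_strictAnti₀ hpos h1
    _ = c := by field_simp

/-- Lemma 4.3: for fixed `v ∈ ℝ^d` and `ε > 0` there is `r₀ > 0` such
that for `|E| > r₀`, once an iterate at step `j₁ - 1` avoids the `ε`-disc around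
`E - v_{j₁}`, every iterate at step `j₂ ≥ j₁ + 2` is finite, nonzero, and its
reciprocal lies in the `ε`-disc around `E - v_{j₂}`. -/
theorem mobius_iteration_large_energy
    (d : ℕ) (v : Fin d → ℝ) (ε : ℝ) (hε : 0 < ε) :
    ∃ r₀ > (0 : ℝ), ∀ E : ℝ, r₀ < |E| →
      ∀ (z : OnePoint ℂ) (j₁ j₂ : ℕ), 1 ≤ j₁ → j₁ ≤ d → j₁ + 2 ≤ j₂ → j₂ ≤ d →
        mobIter v E (j₁ - 1) z ∉
          (fun x : ℂ => (x : OnePoint ℂ)) '' Metric.ball ((E : ℂ) - (vind v j₁ : ℂ)) ε →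
        ∃ x : ℂ, mobIter v E j₂ z = (x : OnePoint ℂ) ∧ x ≠ 0 ∧
          x⁻¹ ∈ Metric.ball ((E : ℂ) - (vind v j₂ : ℂ)) ε := by
  set ε' : ℝ := min ε 1 with hε'def
  have hε'pos : 0 < ε' := lt_min hε one_pos
  have hε'1 : ε' ≤ 1 := min_le_right _ _
  have hε'ε : ε' ≤ ε := min_le_left _ _
  refine ⟨1 + (∑ i, |v i|) + 2/ε', by positivity, ?_⟩
  intro E hE z j₁ j₂ hj1 hj1d hj12 hj2d hz
  have hsum : ∀ j : ℕ, |vind v j| ≤ ∑ i, |v i| := by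
    intro j
    unfold vind
    split
    · exact Finset.single_le_sum (fun i _ => abs_nonneg (v i)) (Finset.mem_univ _)
    · simpa using Finset.sum_nonneg fun (i : Fin d) _ => abs_nonneg (v i)
  have hw : ∀ j : ℕ, 1 + 2/ε' < ‖(E:ℂ) - (vind v j : ℂ)‖ := by
    intro j
    have he : ((E:ℂ) - (vind v j : ℂ)) = ((E - vind v j : ℝ) : ℂ) := by push_cast; ring
    rw [he, Complex.norm_real, Real.norm_eq_abs]
    have h1 := hsum j
    have h2 : |E| - |vind v j| ≤ |E - vind v j| := abs_sub_abs_le_abs_sub E (vind v j)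
    linarith
  have unfoldIter : ∀ (j : ℕ) (u : OnePoint ℂ),
      mobIter v E (j+1) u = mobius ((E:ℂ) - (vind v (j+1) : ℂ)) (mobIter v E j u) :=
    fun j u => rfl
  obtain ⟨m, rfl⟩ : ∃ m, j₁ = m + 1 := ⟨j₁ - 1, by omega⟩
  simp only [Nat.add_sub_cancel] at hz
  have hinv1 : (1:ℝ) ≤ 1/ε' := by
    rw [le_div_iff₀ hε'pos, one_mul]; exact hε'1
  -- Claim 1 : after one step the iterate is finite with norm ≤ 1/ε'
  have c1 : ∃ y : ℂ, mobIter v E (m+1) z = (y : OnePoint ℂ) ∧ ‖y‖ ≤ 1/ε' := by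
    rw [unfoldIter]
    set w₁ := (E:ℂ) - (vind v (m+1) : ℂ) with hw₁def
    rcases hu : mobIter v E m z with _ | x
    · exact ⟨0, by simp [mobius, OnePoint.infty], by simp only [norm_zero]; positivity⟩
    · have hx : ε ≤ dist x w₁ := by
        by_contra hcon
        push_neg at hcon
        exact hz ⟨x, by simpa [Metric.mem_ball] using hcon, by rw [hu]; rfl⟩
      have hne : w₁ ≠ x := by
        intro he
        rw [he, dist_self] at hx
        linarith
      refine ⟨(w₁ - x)⁻¹, mobius_coe w₁ x hne, ?_⟩
      rw [norm_inv, one_div]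
      have hεn : ε' ≤ ‖w₁ - x‖ := by
        have : dist x w₁ = ‖w₁ - x‖ := by rw [dist_eq_norm, ← norm_neg]; ring_nf
        linarith
      exact inv_anti₀ hε'pos hεn
  have hdd : 1/ε' + 1/ε' = 2/ε' := by ring
  have h1 : (0:ℝ) < 1/ε' := by positivity
  -- Claim 2 : from step m+2 on, the iterate is finite with norm < ε'
  have c2 : ∀ k, ∃ x : ℂ, mobIter v E (m+1+1+k) z = (x : OnePoint ℂ) ∧ ‖x‖ < ε' := by
    intro k
    induction k with
    | zero =>
      obtain ⟨y, hy, hyn⟩ := c1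
      have hwj := hw (m+1+1)
      obtain ⟨x, hx, _, hxn, _⟩ := substep ((E:ℂ) - (vind v (m+1+1) : ℂ)) y ε' hε'pos
        (by linarith [hdd])
      refine ⟨x, ?_, hxn⟩
      rw [show m+1+1+0 = (m+1)+1 from rfl, unfoldIter, hy]
      exact hx
    | succ k ih =>
      obtain ⟨y, hy, hyn⟩ := ih
      have hwj := hw (m+1+1+k+1)
      obtain ⟨x, hx, _, hxn, _⟩ := substep ((E:ℂ) - (vind v (m+1+1+k+1) : ℂ)) y ε' hε'pos
        (by linarith [hdd])
      refine ⟨x, ?_, hxn⟩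
      show mobIter v E ((m+1+1+k)+1) z = (x : OnePoint ℂ)
      rw [unfoldIter, hy]
      exact hx
  obtain ⟨k, rfl⟩ : ∃ k, j₂ = m+1+1+k+1 := ⟨j₂ - (m+3), by omega⟩
  obtain ⟨y, hy, hyn⟩ := c2 k
  have hwj := hw (m+1+1+k+1)
  obtain ⟨x, hx, hx0, hxn, hxinv⟩ := substep ((E:ℂ) - (vind v (m+1+1+k+1) : ℂ)) y ε' hε'pos
    (by linarith [hdd])
  refine ⟨x, ?_, hx0, ?_⟩
  · rw [unfoldIter, hy]; exact hx
  · rw [hxinv, Metric.mem_ball, dist_eq_norm]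
    calc ‖(E:ℂ) - (vind v (m+1+1+k+1) : ℂ) - y - ((E:ℂ) - (vind v (m+1+1+k+1) : ℂ))‖
        = ‖y‖ := by rw [← norm_neg]; ring_nf
      _ < ε' := hyn
      _ ≤ ε := hε'ε
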